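/- Let H : ℋ → ℋ* be a bounded symmetric bilinear form on a Hilbert space ℋ that is coercive: H[v,v] ≥ c₀‖v‖² for all v ∈ ℋ with c₀ > 0. Let ℰ ∈ C²(ℋ) with δ²ℰ(ū) = H at a critical point ū (δℰ(ū) = 0), and suppose δ²ℰ is Lipschitz in a neighborhood of ū. Then for any closed subspace W ⊆ ℋ with dist(ū, ū₀ + W) sufficiently small (for a given anchor ū₀), there exists a locally unique critical point ū_W ∈ ū₀ + W of ℰ restricted to ū₀ + W, and ‖ū - ū_W‖ ≤ C inf_{w ∈ W} ‖ū - ū₀ - w‖ for a constant C depending only on c₀ and the Lipschitz constant. -/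

import Mathlib

open Metric InnerProductSpace RealInnerProductSpace ContinuousLinearMap

set_option maxHeartbeats 4000000 in
/-- Abstract quasi-best-approximation: if ℰ ∈ C²(ℋ) has a critical point ū
with coercive Hessian B (c₀-coercivity) and locally Lipschitz second derivative (constant L),
then for every closed subspace W and anchor ū₀ with dist(ū, ū₀ + W) sufficiently small there
is a locally unique critical point ū_W of ℰ on ū₀ + W with
‖ū - ū_W‖ ≤ C inf_{w∈W} ‖ū - ū₀ - w‖, C depending only on c₀ and L. -/
theorem stmt_4 {H : Type*} [NormedAddCommGroup H] [InnerProductSpace ℝ H]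
    [CompleteSpace H] (E : H → ℝ) (B : H →L[ℝ] H →L[ℝ] ℝ) (c0 L : ℝ)
    (hc0 : 0 < c0) (hLpos : 0 < L) (ubar : H)
    (hE : ContDiff ℝ 2 E)
    (hsymm : ∀ v w : H, B v w = B w v)
    (hcoer : ∀ v : H, c0 * ‖v‖ ^ 2 ≤ B v v)
    (hcrit : fderiv ℝ E ubar = 0)
    (hhess : fderiv ℝ (fun x => fderiv ℝ E x) ubar = B)
    (hLip : ∀ x y : H,
      ‖fderiv ℝ (fun z => fderiv ℝ E z) x - fderiv ℝ (fun z => fderiv ℝ E z) y‖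
        ≤ L * ‖x - y‖) :
    ∃ δ > 0, ∃ C > 0, ∀ W : Submodule ℝ H, IsClosed (W : Set H) → ∀ u0 : H,
      Metric.infDist (ubar - u0) (W : Set H) < δ →
      ∃ uW : H, uW - u0 ∈ W ∧ (∀ w ∈ W, fderiv ℝ E uW w = 0) ∧
        (∀ u' : H, u' - u0 ∈ W → ‖u' - uW‖ < δ →
          (∀ w ∈ W, fderiv ℝ E u' w = 0) → u' = uW) ∧
        ‖ubar - uW‖ ≤ C * Metric.infDist (ubar - u0) (W : Set H) := by
  classical
  -- Differentiability of the first derivative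
  have hgdiff : Differentiable ℝ (fderiv ℝ E) :=
    (hE.fderiv_right (by norm_num : (1 : WithTop ℕ∞) + 1 ≤ 2)).differentiable one_ne_zero
  have hfd : ∀ x : H, DifferentiableAt ℝ (fun z => fderiv ℝ E z - B z) x := fun x =>
    (hgdiff x).sub (B.differentiable x)
  have hfderiv : ∀ x : H, fderiv ℝ (fun z => fderiv ℝ E z - B z) x = fderiv ℝ (fderiv ℝ E) x - B := by
    intro x
    rw [fderiv_fun_sub (hgdiff x) (B.differentiable x), B.fderiv]
  have hbound : ∀ x : H, ‖fderiv ℝ (fderiv ℝ E) x - B‖ ≤ L * ‖x - ubar‖ := by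
    intro x
    have h := hLip x ubar
    rw [hhess] at h
    exact h
  -- Mean-value consequence on balls around ubar
  have hcons : ∀ (ρ : ℝ) (x y : H), ‖x - ubar‖ ≤ ρ → ‖y - ubar‖ ≤ ρ →
      ‖fderiv ℝ E x - fderiv ℝ E y - B (x - y)‖ ≤ L * ρ * ‖x - y‖ := by
    intro ρ x y hx hy
    have hx' : x ∈ closedBall ubar ρ := by rwa [mem_closedBall, dist_eq_norm]
    have hy' : y ∈ closedBall ubar ρ := by rwa [mem_closedBall, dist_eq_norm]
    have key := (convex_closedBall ubar ρ).norm_image_sub_le_of_norm_fderiv_le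
      (f := fun z => fderiv ℝ E z - B z) (C := L * ρ) (fun z _ => hfd z)
      (fun z hz => by
        rw [hfderiv z]
        refine (hbound z).trans ?_
        have hz' : ‖z - ubar‖ ≤ ρ := by rwa [mem_closedBall, dist_eq_norm] at hz
        exact mul_le_mul_of_nonneg_left hz' hLpos.le)
      hy' hx'
    have heq : (fderiv ℝ E x - B x) - (fderiv ℝ E y - B y)
        = fderiv ℝ E x - fderiv ℝ E y - B (x - y) := by
      rw [map_sub]; abel
    rw [heq] at key
    exact key
  obtain ⟨nB, hnB1, hnB2⟩ : ∃ nB : ℝ, 0 ≤ nB ∧ ∀ x : H, ‖B x‖ ≤ nB * ‖x‖ :=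
    ⟨‖B‖, by positivity, fun x => B.le_opNorm x⟩
  set K : ℝ := nB + c0 with hKdef
  have hKpos : 0 < K := by rw [hKdef]; linarith
  have hc0' : c0 ≠ 0 := ne_of_gt hc0
  have hL' : L ≠ 0 := ne_of_gt hLpos
  have h4K : 0 < 4*K + c0 := by linarith
  have h4K' : 4*K + c0 ≠ 0 := ne_of_gt h4K
  set δ : ℝ := c0^2/(2*L*(4*K + c0)) with hδdef
  set C : ℝ := 1 + 4*K/c0 with hCdef
  have hδpos : 0 < δ := by
    rw [hδdef]
    exact div_pos (by positivity) (by positivity)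
  have hCpos : 0 < C := by
    rw [hCdef]
    have : 0 < 4*K/c0 := div_pos (by linarith) hc0
    linarith
  have hC1 : 1 < C := by
    rw [hCdef]
    exact lt_add_of_pos_right 1 (div_pos (by linarith) hc0)
  have hCδ : C * δ = c0/(2*L) := by
    rw [hCdef, hδdef]
    field_simp
    ring
  refine ⟨δ, hδpos, C, hCpos, ?_⟩
  intro W hWclosed u0 hd
  haveI : CompleteSpace W := hWclosed.completeSpace_coe
  set d : ℝ := Metric.infDist (ubar - u0) (W : Set H) with hddef
  have hd0 : 0 ≤ d := Metric.infDist_nonneg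
  set π : W := W.orthogonalProjectionOnto (ubar - u0) with hπdef
  have hπ : ‖ubar - u0 - (π : H)‖ ≤ d := by
    refine le_of_forall_pos_le_add (fun ε hε => ?_)
    have hne : (W : Set H).Nonempty := ⟨0, W.zero_mem⟩
    obtain ⟨y, hy, hdy⟩ := (Metric.infDist_lt_iff hne).mp
      (lt_add_of_pos_right _ hε : Metric.infDist (ubar - u0) (W : Set H) < _ + ε)
    have h1 : ‖ubar - u0 - (π : H)‖ ≤ ‖ubar - u0 - y‖ := by
      rw [hπdef, show ((W.orthogonalProjectionOnto (ubar - u0) : W) : H) = W.starProjection (ubar - u0) from rfl,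
        Submodule.starProjection_minimal]
      exact ciInf_le ⟨0, by rintro a ⟨x, rfl⟩; positivity⟩ (⟨y, hy⟩ : W)
    calc ‖ubar - u0 - (π : H)‖ ≤ ‖ubar - u0 - y‖ := h1
      _ = dist (ubar - u0) y := (dist_eq_norm _ _).symm
      _ ≤ d + ε := hdy.le
  set r : ℝ := (4*K/c0)*d with hrdef
  have hr0 : 0 ≤ r := by
    rw [hrdef]
    exact mul_nonneg (div_nonneg (by linarith) hc0.le) hd0
  set ρ : ℝ := d + r with hρdef
  have hρ0 : 0 ≤ ρ := by rw [hρdef]; exact add_nonneg hd0 hr0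
  have hρd : ρ = C * d := by rw [hρdef, hrdef, hCdef]; ring
  have hρCδ : ρ < C * δ := by
    rw [hρd]; exact mul_lt_mul_of_pos_left hd hCpos
  have hLρ : L * ρ < c0/2 := by
    calc L * ρ < L * (C * δ) := mul_lt_mul_of_pos_left hρCδ hLpos
      _ = c0/2 := by rw [hCδ]; field_simp
  have hLδ : L * δ < c0/2 := by
    have h1 : δ < C * δ := (lt_mul_iff_one_lt_left hδpos).mpr hC1
    calc L * δ < L * (C * δ) := mul_lt_mul_of_pos_left h1 hLpos
      _ = c0/2 := by rw [hCδ]; field_simp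
  clear_value K δ C d r ρ
  -- restricted bilinear form and Lax–Milgram
  set ι := W.subtypeL with hιdef
  set Bw : W →L[ℝ] W →L[ℝ] ℝ := (((B.comp ι).flip).comp ι).flip with hBwdef
  have hBw : ∀ v w : W, Bw v w = B (v : H) (w : H) := fun v w => rfl
  have hco : ∀ u : W, c0 * ‖u‖ * ‖u‖ ≤ Bw u u := by
    intro u
    have hn : ‖u‖ = ‖(u : H)‖ := rfl
    calc c0 * ‖u‖ * ‖u‖ = c0 * ‖(u : H)‖^2 := by rw [hn]; ring
      _ ≤ B (u : H) (u : H) := hcoer _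
      _ = Bw u u := (hBw u u).symm
  have coer : IsCoercive Bw := ⟨c0, hc0, hco⟩
  set A := coer.continuousLinearEquivOfBilin with hAdef
  have hA : ∀ v w : W, ⟪A v, w⟫_ℝ = Bw v w := coer.continuousLinearEquivOfBilin_apply
  have hAlow : ∀ v : W, c0 * ‖v‖ ≤ ‖A v‖ := by
    intro v
    rcases eq_or_ne v 0 with rfl | hv
    · simp
    · have hvpos : 0 < ‖v‖ := norm_pos_iff.mpr hv
      have h1 : c0 * ‖v‖ * ‖v‖ ≤ ‖A v‖ * ‖v‖ := by
        calc c0 * ‖v‖ * ‖v‖ ≤ Bw v v := hco v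
          _ = ⟪A v, v⟫_ℝ := (hA v v).symm
          _ ≤ ‖A v‖ * ‖v‖ := real_inner_le_norm _ _
      exact (mul_le_mul_iff_of_pos_right hvpos).mp h1
  have hAinv : ∀ y : W, ‖A.symm y‖ ≤ ‖y‖ / c0 := by
    intro y
    have h := hAlow (A.symm y)
    rw [A.apply_symm_apply] at h
    rw [le_div_iff₀ hc0]
    linarith
  -- dual formulation
  set D := (InnerProductSpace.toDual ℝ W).symm with hDdef
  set Φ : W → W := fun w => D ((fderiv ℝ E (u0 + (w : H))).comp ι) with hΦdef
  have hAeq : ∀ v : W, A v = D ((B (v : H)).comp ι) := by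
    intro v
    apply (InnerProductSpace.toDual ℝ W).injective
    rw [hDdef, LinearIsometryEquiv.apply_symm_apply]
    ext z
    rw [InnerProductSpace.toDual_apply_apply, hA]
    rfl
  have hcomp_norm : ∀ F : H →L[ℝ] ℝ, ‖F.comp ι‖ ≤ ‖F‖ := by
    intro F
    refine ContinuousLinearMap.opNorm_le_bound _ (norm_nonneg F) (fun z => ?_)
    calc ‖(F.comp ι) z‖ = ‖F (z : H)‖ := rfl
      _ ≤ ‖F‖ * ‖(z : H)‖ := F.le_opNorm _
      _ = ‖F‖ * ‖z‖ := rfl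
  have hsubco : ∀ w w' : W, (u0 + (w : H)) - (u0 + (w' : H)) = ((w - w' : W) : H) := by
    intro w w'
    push_cast
    abel
  have hkey : ∀ (ρ' : ℝ) (w w' : W), ‖u0 + (w : H) - ubar‖ ≤ ρ' → ‖u0 + (w' : H) - ubar‖ ≤ ρ' →
      ‖Φ w - Φ w' - A (w - w')‖ ≤ L * ρ' * ‖w - w'‖ := by
    intro ρ' w w' hw hw'
    have hdiff : Φ w - Φ w' - A (w - w')
        = D ((fderiv ℝ E (u0 + (w : H)) - fderiv ℝ E (u0 + (w' : H))
            - B ((u0 + (w : H)) - (u0 + (w' : H)))).comp ι) := by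
      rw [hAeq, hΦdef]
      simp only
      rw [← map_sub, ← map_sub]
      congr 1
      rw [ContinuousLinearMap.sub_comp, ContinuousLinearMap.sub_comp]
      congr 2
      rw [hsubco]
    rw [hdiff, LinearIsometryEquiv.norm_map]
    refine le_trans (hcomp_norm _) ?_
    have h := hcons ρ' (u0 + (w : H)) (u0 + (w' : H)) hw hw'
    have hn : ‖(u0 + (w : H)) - (u0 + (w' : H))‖ = ‖w - w'‖ := by rw [hsubco]; rfl
    rw [hn] at h
    exact h
  -- membership estimates
  have hπmem : ‖u0 + (π : H) - ubar‖ ≤ d := by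
    have he : u0 + (π : H) - ubar = -(ubar - u0 - (π : H)) := by abel
    rw [he, norm_neg]
    exact hπ
  have hmem : ∀ w : W, ‖w - π‖ ≤ r → ‖u0 + (w : H) - ubar‖ ≤ ρ := by
    intro w hw
    have he : u0 + (w : H) - ubar = (u0 + (π : H) - ubar) + ((w - π : W) : H) := by
      push_cast; abel
    rw [he]
    calc ‖(u0 + (π : H) - ubar) + ((w - π : W) : H)‖
        ≤ ‖u0 + (π : H) - ubar‖ + ‖((w - π : W) : H)‖ := norm_add_le _ _
      _ ≤ d + r := add_le_add hπmem hw
      _ = ρ := hρdef.symm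
  -- the Newton map
  set T : W → W := fun w => w - A.symm (Φ w) with hTdef
  have hTcontr : ∀ w w' : W, ‖u0 + (w : H) - ubar‖ ≤ ρ → ‖u0 + (w' : H) - ubar‖ ≤ ρ →
      ‖T w - T w'‖ ≤ (1/2) * ‖w - w'‖ := by
    intro w w' hw hw'
    have he : T w - T w' = A.symm (A (w - w') - (Φ w - Φ w')) := by
      rw [hTdef]
      simp only
      rw [map_sub A.symm (A (w - w')) (Φ w - Φ w'), A.symm_apply_apply,
        map_sub A.symm (Φ w) (Φ w')]
      abel
    rw [he]
    have h2 : ‖A (w - w') - (Φ w - Φ w')‖ = ‖Φ w - Φ w' - A (w - w')‖ := norm_sub_rev _ _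
    have h3 := hkey ρ w w' hw hw'
    calc ‖A.symm (A (w - w') - (Φ w - Φ w'))‖
        ≤ ‖A (w - w') - (Φ w - Φ w')‖ / c0 := hAinv _
      _ = ‖Φ w - Φ w' - A (w - w')‖ / c0 := by rw [h2]
      _ ≤ (L * ρ * ‖w - w'‖) / c0 := by gcongr
      _ ≤ 1/2 * ‖w - w'‖ := by
          rw [div_le_iff₀ hc0]
          nlinarith [norm_nonneg (w - w'), hLρ]
  -- estimate at the projection point
  have hπρ : ‖u0 + (π : H) - ubar‖ ≤ ρ := le_trans hπmem (by rw [hρdef]; linarith [hr0])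
  have hgπ : ‖fderiv ℝ E (u0 + (π : H))‖ ≤ (L * ρ + nB) * d := by
    have h0 : ‖ubar - ubar‖ ≤ ρ := by simpa using hρ0
    have h1 := hcons ρ (u0 + (π : H)) ubar hπρ h0
    rw [hcrit, sub_zero] at h1
    have h2 : fderiv ℝ E (u0 + (π : H))
        = (fderiv ℝ E (u0 + (π : H)) - B (u0 + (π : H) - ubar)) + B (u0 + (π : H) - ubar) := by
      abel
    have h3 : (0:ℝ) ≤ L * ρ + nB :=
      add_nonneg (mul_nonneg hLpos.le hρ0) hnB1
    calc ‖fderiv ℝ E (u0 + (π : H))‖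
        = ‖(fderiv ℝ E (u0 + (π : H)) - B (u0 + (π : H) - ubar)) + B (u0 + (π : H) - ubar)‖ := by
          rw [← h2]
      _ ≤ ‖fderiv ℝ E (u0 + (π : H)) - B (u0 + (π : H) - ubar)‖
          + ‖B (u0 + (π : H) - ubar)‖ := norm_add_le _ _
      _ ≤ L * ρ * ‖u0 + (π : H) - ubar‖ + nB * ‖u0 + (π : H) - ubar‖ :=
          add_le_add h1 (hnB2 _)
      _ = (L * ρ + nB) * ‖u0 + (π : H) - ubar‖ := by ring
      _ ≤ (L * ρ + nB) * d := mul_le_mul_of_nonneg_left hπmem h3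
  have hTπ : ‖T π - π‖ ≤ r / 2 := by
    have he : T π - π = -(A.symm (Φ π)) := by rw [hTdef]; simp only; abel
    rw [he, norm_neg]
    have h1 : ‖Φ π‖ ≤ (L * ρ + nB) * d := by
      rw [hΦdef]
      simp only
      rw [LinearIsometryEquiv.norm_map]
      exact le_trans (hcomp_norm _) hgπ
    have h2 : L * ρ + nB ≤ 2 * K := by
      rw [hKdef]
      linarith [hLρ, hc0, hnB1]
    calc ‖A.symm (Φ π)‖ ≤ ‖Φ π‖ / c0 := hAinv _
      _ ≤ ((L * ρ + nB) * d) / c0 := by gcongr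
      _ ≤ (2 * K * d) / c0 := by
          apply (div_le_div_iff_of_pos_right hc0).mpr
          exact mul_le_mul_of_nonneg_right h2 hd0
      _ = r / 2 := by rw [hrdef]; ring
  -- self-mapping of the closed ball
  have hπS : π ∈ Metric.closedBall π r := Metric.mem_closedBall_self hr0
  have hmemS : ∀ w : W, w ∈ Metric.closedBall π r → ‖u0 + (w : H) - ubar‖ ≤ ρ := by
    intro w hw
    apply hmem
    rwa [Metric.mem_closedBall, dist_eq_norm] at hw
  have hTmaps : ∀ w : W, w ∈ Metric.closedBall π r → T w ∈ Metric.closedBall π r := by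
    intro w hw
    have hw' : ‖w - π‖ ≤ r := by rwa [Metric.mem_closedBall, dist_eq_norm] at hw
    rw [Metric.mem_closedBall, dist_eq_norm]
    have h1 : ‖T w - T π‖ ≤ 1/2 * ‖w - π‖ := hTcontr w π (hmemS w hw) hπρ
    have h2 : T w - π = (T w - T π) + (T π - π) := by abel
    calc ‖T w - π‖ = ‖(T w - T π) + (T π - π)‖ := by rw [← h2]
      _ ≤ ‖T w - T π‖ + ‖T π - π‖ := norm_add_le _ _
      _ ≤ 1/2 * r + r/2 := add_le_add (le_trans h1 (by linarith)) hTπ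
      _ = r := by ring
  haveI : Nonempty (Metric.closedBall π r) := ⟨⟨π, hπS⟩⟩
  haveI : CompleteSpace (Metric.closedBall π r) :=
    Metric.isClosed_closedBall.completeSpace_coe
  have hcontr : ContractingWith (1/2 : NNReal)
      (fun x : Metric.closedBall π r => (⟨T x, hTmaps x x.2⟩ : Metric.closedBall π r)) := by
    constructor
    · rw [← NNReal.coe_lt_coe]; norm_num
    · refine LipschitzWith.of_dist_le_mul (fun x y => ?_)
      have h := hTcontr x y (hmemS x x.2) (hmemS y y.2)
      calc dist (⟨T x, hTmaps x x.2⟩ : Metric.closedBall π r) ⟨T y, hTmaps y y.2⟩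
          = ‖T (x : W) - T (y : W)‖ := by rw [Subtype.dist_eq, dist_eq_norm]
        _ ≤ 1/2 * ‖(x : W) - (y : W)‖ := h
        _ = ((1/2 : NNReal) : ℝ) * dist x y := by
            rw [Subtype.dist_eq, dist_eq_norm]; norm_num
  set fp := ContractingWith.fixedPoint
    (fun x : Metric.closedBall π r => (⟨T x, hTmaps x x.2⟩ : Metric.closedBall π r)) hcontr
    with hfpdef
  set wst : W := (fp : W) with hwstdef
  have hfix : T wst = wst := congrArg Subtype.val hcontr.fixedPoint_isFixedPt
  have hΦ0 : Φ wst = 0 := by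
    have h1 := hfix
    rw [hTdef] at h1
    simp only at h1
    have h2 : A.symm (Φ wst) = 0 := sub_eq_self.mp h1
    exact (ContinuousLinearEquiv.map_eq_zero_iff A.symm).mp h2
  have hcritW : ∀ z ∈ W, fderiv ℝ E (u0 + (wst : H)) z = 0 := by
    intro z hz
    have h0 : (fderiv ℝ E (u0 + (wst : H))).comp ι = 0 := by
      have h := congrArg (InnerProductSpace.toDual ℝ W) hΦ0
      rw [hΦdef] at h
      simp only at h
      rw [hDdef, LinearIsometryEquiv.apply_symm_apply] at h
      simpa using h
    have h1 := ContinuousLinearMap.ext_iff.mp h0 ⟨z, hz⟩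
    simpa [hιdef] using h1
  have hwstS : wst ∈ Metric.closedBall π r := fp.2
  have hwstρ : ‖u0 + (wst : H) - ubar‖ ≤ ρ := hmemS _ hwstS
  refine ⟨u0 + (wst : H), ?_, hcritW, ?_, ?_⟩
  · have h : u0 + (wst : H) - u0 = (wst : H) := by abel
    rw [h]
    exact wst.2
  · -- local uniqueness
    intro u' hu'W hu'close hu'crit
    set w1 : W := ⟨u' - u0, hu'W⟩ with hw1def
    have hu0w1 : u0 + (w1 : H) = u' := by rw [hw1def]; simp
    have hΦ1 : Φ w1 = 0 := by
      rw [hΦdef]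
      simp only
      have h0 : (fderiv ℝ E (u0 + (w1 : H))).comp ι = 0 := by
        ext z
        rw [hu0w1]
        simpa [hιdef] using hu'crit (z : H) z.2
      rw [h0, map_zero]
    have hd1 : ‖u0 + (w1 : H) - ubar‖ ≤ δ + ρ := by
      rw [hu0w1]
      have h2 : u' - ubar = (u' - (u0 + (wst : H))) + (u0 + (wst : H) - ubar) := by abel
      calc ‖u' - ubar‖ = ‖(u' - (u0 + (wst : H))) + (u0 + (wst : H) - ubar)‖ := by rw [← h2]
        _ ≤ ‖u' - (u0 + (wst : H))‖ + ‖u0 + (wst : H) - ubar‖ := norm_add_le _ _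
        _ ≤ δ + ρ := add_le_add hu'close.le hwstρ
    have hd2 : ‖u0 + (wst : H) - ubar‖ ≤ δ + ρ := le_trans hwstρ (by linarith)
    have hk := hkey (δ + ρ) w1 wst hd1 hd2
    rw [hΦ1, hΦ0, sub_self, zero_sub, norm_neg] at hk
    have hlow := hAlow (w1 - wst)
    have hLsmall : L * (δ + ρ) < c0 := by
      have h : L * (δ + ρ) = L * δ + L * ρ := by ring
      linarith [hLδ, hLρ]
    have heq : w1 = wst := by
      by_contra hne
      have hpos : 0 < ‖w1 - wst‖ := by
        rw [norm_pos_iff]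
        exact sub_ne_zero.mpr hne
      linarith [mul_lt_mul_of_pos_right hLsmall hpos, hk, hlow]
    rw [← hu0w1, heq]
  · -- quasi-optimality
    have hwr : ‖wst - π‖ ≤ r := by
      have h := hwstS
      rwa [Metric.mem_closedBall, dist_eq_norm] at h
    have h2 : ubar - (u0 + (wst : H)) = (ubar - u0 - (π : H)) + ((π - wst : W) : H) := by
      push_cast
      abel
    have h3 : ‖((π - wst : W) : H)‖ ≤ r := by
      have : ‖((π - wst : W) : H)‖ = ‖π - wst‖ := rfl
      rw [this, norm_sub_rev]
      exact hwr
    calc ‖ubar - (u0 + (wst : H))‖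
        = ‖(ubar - u0 - (π : H)) + ((π - wst : W) : H)‖ := by rw [← h2]
      _ ≤ ‖ubar - u0 - (π : H)‖ + ‖((π - wst : W) : H)‖ := norm_add_le _ _
      _ ≤ d + r := add_le_add hπ h3
      _ = C * d := by rw [← hρdef, hρd]
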